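/- The finite models of the variety of commutative, idempotent, medial groupoids satisfying (xy·x)y·x = y have orders exactly the powers of 11: the spectrum is {11^n : n = 0, 1, 2, ...}. -/
import Mathlib

theorem aux_pentagonal_card (Q : Type) [Fintype Q] [Nonempty Q] (m : Q → Q → Q)
    (hc : ∀ x y : Q, m x y = m y x)
    (hi : ∀ x : Q, m x x = x)
    (hmed : ∀ x y z u : Q, m (m x y) (m z u) = m (m x z) (m y u))
    (hp : ∀ x y : Q, m (m (m (m x y) x) y) x = y) :
    ∃ k : ℕ, Fintype.card Q = 11 ^ k := by
  classical
  obtain ⟨o⟩ := ‹Nonempty Q›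
  set R : Q → Q := fun z => m z o with hRdef
  have hRsurj : Function.Surjective R := fun y => ⟨m (m (m o y) o) y, hp o y⟩
  have hRbij : Function.Bijective R := Finite.surjective_iff_bijective.mp hRsurj
  have hRinj := hRbij.1
  set E : Q ≃ Q := Equiv.ofBijective R hRbij with hEdef
  set d : Q → Q := ⇑E.symm with hddef
  have hRd : ∀ a : Q, R (d a) = a := fun a => E.apply_symm_apply a
  have hdR : ∀ a : Q, d (R a) = a := fun a => E.symm_apply_apply a
  -- R is an endomorphism of m
  have hend : ∀ a b : Q, R (m a b) = m (R a) (R b) := by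
    intro a b
    show m (m a b) o = m (m a o) (m b o)
    calc m (m a b) o = m (m a b) (m o o) := by rw [hi]
      _ = m (m a o) (m b o) := hmed a b o o
  have hdm : ∀ a b : Q, d (m a b) = m (d a) (d b) := by
    intro a b
    apply hRinj
    rw [hRd, hend, hRd, hRd]
  have hdo : d o = o := by
    have : R o = o := by show m o o = o; exact hi o
    conv_lhs => rw [← this]
    exact hdR o
  -- the group structure
  letI instG : Group Q :=
    { mul := fun a b => d (m a b)
      one := o
      inv := fun a => m (m (m a o) a) o
      mul_assoc := by
        intro a b c
        show d (m (d (m a b)) c) = d (m a (d (m b c)))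
        congr 1
        calc m (d (m a b)) c = m (d (m a b)) (d (m c o)) := by rw [show m c o = R c from rfl, hdR]
          _ = d (m (m a b) (m c o)) := (hdm _ _).symm
          _ = d (m (m a o) (m b c)) := by rw [hmed a o b c, hc o c]
          _ = m (d (m a o)) (d (m b c)) := hdm _ _
          _ = m a (d (m b c)) := by rw [show m a o = R a from rfl, hdR]
      one_mul := by
        intro a
        show d (m o a) = a
        rw [hc o a, show m a o = R a from rfl, hdR]
      mul_one := by
        intro a
        show d (m a o) = a
        rw [show m a o = R a from rfl, hdR]
      inv_mul_cancel := by
        intro a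
        show d (m (m (m (m a o) a) o) a) = o
        rw [hp a o, hdo] }
  have hmul : ∀ a b : Q, a * b = d (m a b) := fun _ _ => rfl
  have hone : (1 : Q) = o := rfl
  -- m in terms of the group
  have hmf : ∀ a b : Q, m a b = R (a * b) := by
    intro a b; rw [hmul, hRd]
  have hRmul : ∀ a b : Q, R (a * b) = R a * R b := by
    intro a b
    rw [hmul a b, hRd, hmul (R a) (R b), ← hend, hdR]
  have hRsq : ∀ a : Q, R a * R a = a := by
    intro a
    rw [← hRmul, hmul, show m a a = a from hi a]
    exact hRd a
  have hsq : ∀ a : Q, R (a * a) = a := by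
    intro a; rw [hRmul, hRsq]
  -- every element has order dividing 11
  have h11 : ∀ y : Q, y ^ 11 = 1 := by
    intro y
    set s : Q := R (R y) with hs
    set t : Q := R (R s) with ht
    have hss : s * s = R y := by
      apply hRinj
      rw [hsq, hs]
    have hy4 : y = s ^ 4 := by
      have : y = (s * s) * (s * s) := by rw [hss, hRsq]
      rw [this, ← mul_assoc, pow_succ, pow_succ, pow_succ, pow_one]
    have htt : t * t = R s := by
      apply hRinj
      rw [hsq, ht]
    have hs4 : s = t ^ 4 := by
      have : s = (t * t) * (t * t) := by rw [htt, hRsq]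
      rw [this, ← mul_assoc, pow_succ, pow_succ, pow_succ, pow_one]
    -- pentagonal identity at x = o gives t * s = y
    have hts : t * s = y := by
      have h0 := hp o y
      -- m o y = R y
      have e1 : m o y = R y := by rw [hc o y]
      have e2 : m (R y) o = R (R y) := rfl
      rw [e1, e2, ← hs] at h0
      -- h0 : m (m s y) o = y
      have e3 : m (m s y) o = R (m s y) := rfl
      rw [e3, hmf s y, hRmul, hRmul, ← ht, ← hs] at h0
      exact h0
    have hteq : t = s ^ 3 := by
      have h1 : t * s = s ^ 3 * s := by rw [hts, hy4]; group
      exact mul_right_cancel h1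
    have hs11 : s ^ 11 = 1 := by
      have h1 : s ^ 11 * s = 1 * s := by
        rw [one_mul]
        calc s ^ 11 * s = (s ^ 3) ^ 4 := by group
          _ = t ^ 4 := by rw [hteq]
          _ = s := hs4.symm
      exact mul_right_cancel h1
    calc y ^ 11 = (s ^ 4) ^ 11 := by rw [hy4]
      _ = (s ^ 11) ^ 4 := by rw [← pow_mul, ← pow_mul, Nat.mul_comm]
      _ = 1 := by rw [hs11, one_pow]
  haveI : Fact (Nat.Prime 11) := ⟨by norm_num⟩
  have hpg : IsPGroup 11 Q := by
    intro g
    exact ⟨1, by simpa using h11 g⟩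
  obtain ⟨n, hn⟩ := IsPGroup.iff_card.mp hpg
  exact ⟨n, by rw [← Nat.card_eq_fintype_card, hn]⟩

theorem spectrum_commutative_pentagonal :
    {n : ℕ | ∃ (Q : Type) (_ : Fintype Q) (_ : Nonempty Q) (m : Q → Q → Q),
      (∀ x y : Q, m x y = m y x) ∧
      (∀ x : Q, m x x = x) ∧
      (∀ x y z u : Q, m (m x y) (m z u) = m (m x z) (m y u)) ∧
      (∀ x y : Q, m (m (m (m x y) x) y) x = y) ∧
      Fintype.card Q = n} = {n : ℕ | ∃ k : ℕ, n = 11 ^ k} := by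
  ext n
  simp only [Set.mem_setOf_eq]
  constructor
  · rintro ⟨Q, _, _, m, hc, hi, hmed, hp, hcard⟩
    obtain ⟨k, hk⟩ := aux_pentagonal_card Q m hc hi hmed hp
    exact ⟨k, by rw [← hcard, hk]⟩
  · rintro ⟨k, rfl⟩
    refine ⟨Fin k → ZMod 11, inferInstance, inferInstance,
      fun x y i => 6 * x i + 6 * y i, ?_, ?_, ?_, ?_, ?_⟩
    · intro x y; funext i
      show (6 * x i + 6 * y i : ZMod 11) = 6 * y i + 6 * x i
      ring
    · intro x; funext i
      show (6 * x i + 6 * x i : ZMod 11) = x i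
      have : ∀ a : ZMod 11, 6 * a + 6 * a = a := by decide
      exact this (x i)
    · intro x y z u; funext i
      show (6 * (6 * x i + 6 * y i) + 6 * (6 * z i + 6 * u i) : ZMod 11)
        = 6 * (6 * x i + 6 * z i) + 6 * (6 * y i + 6 * u i)
      ring
    · intro x y; funext i
      show (6 * (6 * (6 * (6 * x i + 6 * y i) + 6 * x i) + 6 * y i) + 6 * x i : ZMod 11) = y i
      have : ∀ a b : ZMod 11, 6 * (6 * (6 * (6 * a + 6 * b) + 6 * a) + 6 * b) + 6 * a = b := by
        decide
      exact this (x i) (y i)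
    · simp [Fintype.card_fun]
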